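/- Let P1 and P2 be coloured paths with colourings ω1 and ω2 from colour-set C, and let P = P1P2 be their concatenation (joining an endpoint of P1 to an endpoint of P2 by an edge), with colouring ω agreeing with ωi on Pi. Then for every colour d in C, m(P,ω,d) ≤ m(P1,ω1,d) + m(P2,ω2,d). -/

import Mathlib

namespace Flood

variable {V C : Type*}

/-- Two vertices are joined by an edge inside a monochromatic class. -/
def monoAdj (G : SimpleGraph V) (ω : V → C) (a b : V) : Prop :=
  G.Adj a b ∧ ω a = ω b

/-- `u` and `v` lie in a common monochromatic component of the colouring `ω`. -/
def monoLinked (G : SimpleGraph V) (ω : V → C) (u v : V) : Prop :=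
  Relation.ReflTransGen (monoAdj G ω) u v

/-- One flooding move: recolour the monochromatic component of `v` with colour `d`. -/
noncomputable def floodMove (G : SimpleGraph V) (ω : V → C) (v : V) (d : C) : V → C :=
  fun u => @ite _ (monoLinked G ω v u) (Classical.propDecidable _) d (ω u)

/-- Apply a sequence of flooding moves. -/
noncomputable def floodSeq (G : SimpleGraph V) (ω : V → C) (S : List (V × C)) : V → C :=
  S.foldl (fun ω' m => floodMove G ω' m.1 m.2) ω

/-- The sequence `S` floods `G`, i.e. makes it monochromatic. -/
def Floods (G : SimpleGraph V) (ω : V → C) (S : List (V × C)) : Prop :=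
  ∀ a b, floodSeq G ω S a = floodSeq G ω S b

/-- Minimum number of moves needed to make `G` monochromatic. -/
noncomputable def floodCost (G : SimpleGraph V) (ω : V → C) : ℕ :=
  sInf {k | ∃ S, S.length = k ∧ Floods G ω S}

/-- Minimum number of moves needed to make `G` monochromatic in colour `d`. -/
noncomputable def floodCostIn (G : SimpleGraph V) (ω : V → C) (d : C) : ℕ :=
  sInf {k | ∃ S, S.length = k ∧ ∀ a, floodSeq G ω S a = d}

/-- The sequence `S` links `u` and `v`. -/
def Links (G : SimpleGraph V) (ω : V → C) (S : List (V × C)) (u v : V) : Prop :=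
  monoLinked G (floodSeq G ω S) u v

/-- Minimum number of moves needed to link `u` and `v`. -/
noncomputable def linkCost (G : SimpleGraph V) (ω : V → C) (u v : V) : ℕ :=
  sInf {k | ∃ S, S.length = k ∧ Links G ω S u v}

/-- Minimum number of moves needed to link `u` and `v` in a monochromatic
component of colour `d`. -/
noncomputable def linkCostIn (G : SimpleGraph V) (ω : V → C) (u v : V) (d : C) : ℕ :=
  sInf {k | ∃ S, S.length = k ∧ Links G ω S u v ∧ floodSeq G ω S u = d}


end Flood

open Flood

namespace FloodAux

open Flood SimpleGraph

variable {C : Type*}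

section General

variable {V : Type*} {G : SimpleGraph V} {ω : V → C}

lemma monoAdj_symm : Symmetric (monoAdj G ω) := fun _ _ h => ⟨h.1.symm, h.2.symm⟩

lemma monoLinked_symm {a b : V} (h : monoLinked G ω a b) : monoLinked G ω b a :=
  @Std.Symm.symm _ _ (@Relation.ReflTransGen.stdSymm _ _ ⟨monoAdj_symm⟩) _ _ h

lemma monoLinked_colour {a b : V} (h : monoLinked G ω a b) : ω a = ω b := by
  induction h with
  | refl => rfl
  | tail _ h ih => exact ih.trans h.2

lemma floodMove_of_linked {u x : V} (h : monoLinked G ω u x) (c : C) :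
    floodMove G ω u c x = c := by
  unfold Flood.floodMove; exact if_pos h

lemma floodMove_of_not_linked {u x : V} (h : ¬ monoLinked G ω u x) (c : C) :
    floodMove G ω u c x = ω x := by
  unfold Flood.floodMove; exact if_neg h

lemma floodMove_self (u : V) (c : C) : floodMove G ω u c u = c :=
  floodMove_of_linked Relation.ReflTransGen.refl c

lemma floodMove_congr {a b : V} (h : monoLinked G ω a b) (c : C) :
    floodMove G ω a c = floodMove G ω b c := by
  funext x
  by_cases h' : monoLinked G ω a x
  · rw [floodMove_of_linked h', floodMove_of_linked (Relation.ReflTransGen.trans (monoLinked_symm h) h')]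
  · rw [floodMove_of_not_linked h',
      floodMove_of_not_linked (fun hb => h' (Relation.ReflTransGen.trans h hb))]

lemma floodSeq_nil (ω : V → C) : floodSeq G ω [] = ω := rfl

lemma floodSeq_cons (ω : V → C) (u : V) (c : C) (S : List (V × C)) :
    floodSeq G ω ((u, c) :: S) = floodSeq G (floodMove G ω u c) S := rfl

lemma floodSeq_allD_of_eq (G : SimpleGraph V) (d : C) :
    ∀ (L : List V) (ω : V → C) (x : V), ω x = d →
      floodSeq G ω (L.map fun v => (v, d)) x = d := by
  intro L
  induction L with
  | nil => intro ω x h; exact h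
  | cons v L' ih =>
    intro ω x h
    rw [List.map_cons, floodSeq_cons]
    apply ih
    by_cases hl : monoLinked G ω v x
    · rw [floodMove_of_linked hl]
    · rw [floodMove_of_not_linked hl]; exact h

lemma floodSeq_allD_mem (G : SimpleGraph V) (d : C) :
    ∀ (L : List V) (ω : V → C) (v : V), v ∈ L →
      floodSeq G ω (L.map fun v => (v, d)) v = d := by
  intro L
  induction L with
  | nil => intro ω v hv; exact absurd hv (List.not_mem_nil)
  | cons u L' ih =>
    intro ω v hv
    rw [List.map_cons, floodSeq_cons]
    rcases List.mem_cons.mp hv with rfl | hv'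
    · exact floodSeq_allD_of_eq G d L' _ v (floodMove_self v d)
    · exact ih _ v hv'

end General

lemma exists_floods {N : ℕ} (ω : Fin N → C) (d : C) :
    ∃ S : List (Fin N × C), ∀ a, floodSeq (pathGraph N) ω S a = d := by
  refine ⟨(List.finRange N).map fun v => (v, d), fun a => ?_⟩
  exact floodSeq_allD_mem _ d _ ω a (List.mem_finRange a)

section Path

variable {N : ℕ}

lemma linked_iff (ω : Fin N → C) (a b : Fin N) :
    monoLinked (pathGraph N) ω a b ↔
      ∀ t : Fin N, min a.val b.val ≤ t.val → t.val ≤ max a.val b.val → ω t = ω a := by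
  constructor
  · intro h
    induction h with
    | refl =>
      intro t h1 h2
      have : t = a := Fin.ext (by omega)
      rw [this]
    | @tail x b' hax hxb ih =>
      intro t h1 h2
      have hx : ω x = ω a := ih x (by omega) (by omega)
      have hb : ω b' = ω a := hxb.2 ▸ hx
      rcases pathGraph_adj.mp hxb.1 with hadj | hadj
      · have key : (min a.val x.val ≤ t.val ∧ t.val ≤ max a.val x.val) ∨ t.val = b'.val := by
          omega
        rcases key with ⟨k1, k2⟩ | k
        · exact ih t k1 k2
        · have : t = b' := Fin.ext k
          rw [this]; exact hb
      · have key : (min a.val x.val ≤ t.val ∧ t.val ≤ max a.val x.val) ∨ t.val = b'.val := by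
          omega
        rcases key with ⟨k1, k2⟩ | k
        · exact ih t k1 k2
        · have : t = b' := Fin.ext k
          rw [this]; exact hb
  · intro h
    suffices aux : ∀ (k : ℕ) (a b : Fin N), b.val = a.val + k →
        (∀ t : Fin N, a.val ≤ t.val → t.val ≤ b.val → ω t = ω a) →
        monoLinked (pathGraph N) ω a b by
      rcases le_total a.val b.val with hab | hab
      · exact aux (b.val - a.val) a b (by omega) (fun t h1 h2 => h t (by omega) (by omega))
      · have hba : ω b = ω a := h b (by omega) (by omega)
        apply monoLinked_symm
        exact aux (a.val - b.val) b a (by omega)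
          (fun t h1 h2 => (h t (by omega) (by omega)).trans hba.symm)
    intro k
    induction k with
    | zero =>
      intro a b hk _
      have : a = b := Fin.ext (by omega)
      rw [this]
      exact Relation.ReflTransGen.refl
    | succ k ihk =>
      intro a b hk hconst
      have hlt : a.val + 1 < N := by have := b.isLt; omega
      set a' : Fin N := ⟨a.val + 1, hlt⟩ with ha'
      have ha'v : a'.val = a.val + 1 := rfl
      have hca' : ω a' = ω a := hconst a' (by omega) (by omega)
      have hadj : monoAdj (pathGraph N) ω a a' := ⟨pathGraph_adj.mpr (Or.inl rfl), hca'.symm⟩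
      have htail : monoLinked (pathGraph N) ω a' b := by
        apply ihk a' b (by omega)
        intro t h1 h2
        exact (hconst t (by omega) (by omega)).trans hca'.symm
      exact Relation.ReflTransGen.head hadj htail

lemma linked_between {ω : Fin N → C} {a b : Fin N} (h : monoLinked (pathGraph N) ω a b)
    (t : Fin N) (h1 : min a.val b.val ≤ t.val) (h2 : t.val ≤ max a.val b.val) :
    monoLinked (pathGraph N) ω a t := by
  rw [linked_iff] at h ⊢
  intro s hs1 hs2
  exact h s (by omega) (by omega)

end Path

section Append

variable {m n : ℕ}

lemma linked_append_left (ω₁ : Fin m → C) (ω₂ : Fin n → C) (a b : Fin m) :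
    monoLinked (pathGraph (m + n)) (Fin.append ω₁ ω₂) (Fin.castAdd n a) (Fin.castAdd n b) ↔
      monoLinked (pathGraph m) ω₁ a b := by
  rw [linked_iff, linked_iff]
  constructor
  · intro h t h1 h2
    have ht := h (Fin.castAdd n t) (by simp <;> omega) (by simp <;> omega)
    rwa [Fin.append_left, Fin.append_left] at ht
  · intro h t h1 h2
    have hbm := a.isLt
    have hcm := b.isLt
    have htm : t.val < m := by simp at h2; omega
    have ht : t = Fin.castAdd n ⟨t.val, htm⟩ := Fin.ext rfl
    rw [ht, Fin.append_left, Fin.append_left]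
    exact h ⟨t.val, htm⟩ (by simp at h1 ⊢; omega) (by simp at h2 ⊢; omega)

lemma linked_append_right (ω₁ : Fin m → C) (ω₂ : Fin n → C) (a b : Fin n) :
    monoLinked (pathGraph (m + n)) (Fin.append ω₁ ω₂) (Fin.natAdd m a) (Fin.natAdd m b) ↔
      monoLinked (pathGraph n) ω₂ a b := by
  rw [linked_iff, linked_iff]
  constructor
  · intro h t h1 h2
    have ht := h (Fin.natAdd m t) (by simp <;> omega) (by simp <;> omega)
    rwa [Fin.append_right, Fin.append_right] at ht
  · intro h t h1 h2
    have htm : m ≤ t.val := by simp at h1; omega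
    have htn : t.val - m < n := by have := t.isLt; omega
    have ht : t = Fin.natAdd m ⟨t.val - m, htn⟩ := Fin.ext (by simp <;> omega)
    rw [ht, Fin.append_right, Fin.append_right]
    exact h ⟨t.val - m, htn⟩ (by simp at h1 ⊢; omega) (by simp at h2 ⊢; omega)

lemma append_apply_left (ω₁ : Fin m → C) (ω₂ : Fin n → C) {x : Fin (m + n)}
    (hxm : x.val < m) : Fin.append ω₁ ω₂ x = ω₁ ⟨x.val, hxm⟩ := by
  have hx0 : x = Fin.castAdd n ⟨x.val, hxm⟩ := Fin.ext rfl
  conv_lhs => rw [hx0]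
  exact Fin.append_left _ _ _

lemma append_apply_right (ω₁ : Fin m → C) (ω₂ : Fin n → C) {x : Fin (m + n)}
    (hxm : m ≤ x.val) (hxn : x.val - m < n) :
    Fin.append ω₁ ω₂ x = ω₂ ⟨x.val - m, hxn⟩ := by
  have hx0 : x = Fin.natAdd m ⟨x.val - m, hxn⟩ := Fin.ext (by simp <;> omega)
  conv_lhs => rw [hx0]
  exact Fin.append_right _ _ _

end Append

/-- The simulation lemma: a colouring that factors through a monotone map can be
flooded at least as fast. -/
lemma simulate {N N' : ℕ} (d : C) :
    ∀ (S : List (Fin N × C)) (ν : Fin N → C) (σ : Fin N' → C) (f : Fin N' → Fin N),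
      Monotone f → σ = ν ∘ f → (∀ a, floodSeq (pathGraph N) ν S a = d) →
      ∃ T : List (Fin N' × C), T.length ≤ S.length ∧
        ∀ a, floodSeq (pathGraph N') σ T a = d := by
  intro S
  induction S with
  | nil =>
    intro ν σ f _ hσ hν
    refine ⟨[], le_refl _, fun a => ?_⟩
    rw [floodSeq_nil, hσ]
    exact hν (f a)
  | cons uc S' ih =>
    obtain ⟨u, c⟩ := uc
    intro ν σ f hf hσ hν
    simp only [floodSeq_cons] at hν
    have hmono : ∀ {p q : Fin N'}, p.val ≤ q.val → (f p).val ≤ (f q).val :=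
      fun h => Fin.le_def.mp (hf (Fin.le_def.mpr h))
    by_cases hex : ∃ x₀, monoLinked (pathGraph N) ν u (f x₀)
    · obtain ⟨u'', hu''⟩ := hex
      classical
      have hfm : floodMove (pathGraph N) ν u c = floodMove (pathGraph N) ν (f u'') c :=
        floodMove_congr hu'' c
      set g : Fin N' → Fin N :=
        fun x => if monoLinked (pathGraph N') σ u'' x then f u'' else f x with hg
      have key : ∀ x : Fin N', ¬ monoLinked (pathGraph N') σ u'' x →
          ¬ monoLinked (pathGraph N) ν (f u'') (f x) := by
        intro x hnl hl
        apply hnl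
        rw [linked_iff]
        intro t h1 h2
        have hmt : monoLinked (pathGraph N) ν (f u'') (f t) := by
          rcases le_total u''.val x.val with hc | hc
          · have l1 := hmono (p := u'') (q := t) (by omega)
            have l2 := hmono (p := t) (q := x) (by omega)
            exact linked_between hl (f t) (by omega) (by omega)
          · have l1 := hmono (p := x) (q := t) (by omega)
            have l2 := hmono (p := t) (q := u'') (by omega)
            exact linked_between hl (f t) (by omega) (by omega)
        calc σ t = ν (f t) := by rw [hσ]; rfl
          _ = ν (f u'') := (monoLinked_colour hmt).symm
          _ = σ u'' := by rw [hσ]; rfl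
      have hgmono : Monotone g := by
        intro x y hxy
        have hxy' : x.val ≤ y.val := Fin.le_def.mp hxy
        by_cases hx : monoLinked (pathGraph N') σ u'' x <;>
          by_cases hy : monoLinked (pathGraph N') σ u'' y
        · simp only [hg, if_pos hx, if_pos hy, le_refl]
        · simp only [hg, if_pos hx, if_neg hy]
          have huy : u''.val ≤ y.val := by
            by_contra hlt
            exact hy (linked_between hx y (by omega) (by omega))
          exact Fin.le_def.mpr (hmono huy)
        · simp only [hg, if_neg hx, if_pos hy]
          have hxu : x.val ≤ u''.val := by
            by_contra hlt
            exact hx (linked_between hy x (by omega) (by omega))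
          exact Fin.le_def.mpr (hmono hxu)
        · simp only [hg, if_neg hx, if_neg hy]
          exact hf hxy
      have hpt : floodMove (pathGraph N') σ u'' c = floodMove (pathGraph N) ν u c ∘ g := by
        funext x
        rw [hfm]
        by_cases hx : monoLinked (pathGraph N') σ u'' x
        · rw [floodMove_of_linked hx]
          simp only [Function.comp_apply, hg, if_pos hx]
          exact (floodMove_self _ _).symm
        · rw [floodMove_of_not_linked hx]
          simp only [Function.comp_apply, hg, if_neg hx]
          rw [floodMove_of_not_linked (key x hx)]
          rw [hσ]; rfl
      obtain ⟨T', hT'len, hT'⟩ := ih (floodMove (pathGraph N) ν u c)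
        (floodMove (pathGraph N') σ u'' c) g hgmono hpt hν
      refine ⟨(u'', c) :: T', by simp only [List.length_cons]; omega, fun a => ?_⟩
      rw [floodSeq_cons]
      exact hT' a
    · push_neg at hex
      have hpt : σ = floodMove (pathGraph N) ν u c ∘ f := by
        funext x
        simp only [Function.comp_apply]
        rw [floodMove_of_not_linked (hex x), hσ]
        rfl
      obtain ⟨T, hTlen, hT⟩ := ih (floodMove (pathGraph N) ν u c) σ f hf hpt hν
      exact ⟨T, by simp only [List.length_cons]; omega, hT⟩

section Concat

variable {m n : ℕ}

lemma concat_step_left (ω₁ : Fin m → C) (ω₂ : Fin n → C) (v : Fin m) (c : C) :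
    ∃ f : Fin (m + n) → Fin (m + n), Monotone f ∧
      floodMove (pathGraph (m + n)) (Fin.append ω₁ ω₂) (Fin.castAdd n v) c
        = Fin.append (floodMove (pathGraph m) ω₁ v c) ω₂ ∘ f := by
  classical
  have hm : 0 < m := v.pos
  have hvm := v.isLt
  set comb := Fin.append ω₁ ω₂ with hcomb
  set B : Fin (m + n) := ⟨m - 1, by omega⟩ with hB
  refine ⟨fun x => if m ≤ x.val ∧ monoLinked (pathGraph (m + n)) comb (Fin.castAdd n v) x
      then B else x, ?_, ?_⟩
  · intro x y hxy
    have hxy' : x.val ≤ y.val := Fin.le_def.mp hxy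
    dsimp only
    by_cases hx : m ≤ x.val ∧ monoLinked (pathGraph (m + n)) comb (Fin.castAdd n v) x <;>
      by_cases hy : m ≤ y.val ∧ monoLinked (pathGraph (m + n)) comb (Fin.castAdd n v) y
    · rw [if_pos hx, if_pos hy]
    · rw [if_pos hx, if_neg hy]
      exact Fin.le_def.mpr (by simp only [hB]; omega)
    · rw [if_neg hx, if_pos hy]
      have hxm : x.val < m := by
        by_contra hge
        push_neg at hge
        refine hx ⟨hge, ?_⟩
        exact linked_between hy.2 x (by simp <;> omega) (by simp <;> omega)
      exact Fin.le_def.mpr (by simp only [hB]; omega)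
    · rw [if_neg hx, if_neg hy]; exact hxy
  · funext x
    simp only [Function.comp_apply]
    by_cases hxm : x.val < m
    · have hx0 : x = Fin.castAdd n ⟨x.val, hxm⟩ := Fin.ext rfl
      have hliff : monoLinked (pathGraph (m + n)) comb (Fin.castAdd n v) x ↔
          monoLinked (pathGraph m) ω₁ v ⟨x.val, hxm⟩ := by
        conv_lhs => rw [hx0]
        exact linked_append_left ω₁ ω₂ v _
      rw [if_neg (fun h => absurd h.1 (by omega))]
      by_cases hl : monoLinked (pathGraph (m + n)) comb (Fin.castAdd n v) x
      · rw [floodMove_of_linked hl,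
          append_apply_left (floodMove (pathGraph m) ω₁ v c) ω₂ hxm,
          floodMove_of_linked (hliff.mp hl)]
      · rw [floodMove_of_not_linked hl,
          append_apply_left (floodMove (pathGraph m) ω₁ v c) ω₂ hxm,
          floodMove_of_not_linked (fun h => hl (hliff.mpr h)), hcomb,
          append_apply_left ω₁ ω₂ hxm]
    · push_neg at hxm
      have hxn : x.val - m < n := by have := x.isLt; omega
      by_cases hl : monoLinked (pathGraph (m + n)) comb (Fin.castAdd n v) x
      · rw [if_pos ⟨hxm, hl⟩, floodMove_of_linked hl]
        have hm1 : m - 1 < m := by omega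
        have hBm : B.val < m := by simp only [hB]; omega
        rw [append_apply_left (floodMove (pathGraph m) ω₁ v c) ω₂ hBm]
        have hlB : monoLinked (pathGraph m) ω₁ v ⟨B.val, hBm⟩ := by
          have hmid : monoLinked (pathGraph (m + n)) comb (Fin.castAdd n v)
              (Fin.castAdd n ⟨B.val, hBm⟩) :=
            linked_between hl _ (by simp [Fin.le_iff_val_le_val, hB] <;> omega) (by simp [Fin.le_iff_val_le_val, hB] <;> omega)
          exact (linked_append_left ω₁ ω₂ v _).mp hmid
        rw [floodMove_of_linked hlB]
      · rw [if_neg (fun h => hl h.2), floodMove_of_not_linked hl,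
          append_apply_right (floodMove (pathGraph m) ω₁ v c) ω₂ hxm hxn, hcomb,
          append_apply_right ω₁ ω₂ hxm hxn]

lemma concat_step_right (ω₁ : Fin m → C) (ω₂ : Fin n → C) (w : Fin n) (c : C) :
    ∃ f : Fin (m + n) → Fin (m + n), Monotone f ∧
      floodMove (pathGraph (m + n)) (Fin.append ω₁ ω₂) (Fin.natAdd m w) c
        = Fin.append ω₁ (floodMove (pathGraph n) ω₂ w c) ∘ f := by
  classical
  have hn : 0 < n := w.pos
  have hwn := w.isLt
  set comb := Fin.append ω₁ ω₂ with hcomb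
  set B : Fin (m + n) := ⟨m, by omega⟩ with hB
  refine ⟨fun x => if x.val < m ∧ monoLinked (pathGraph (m + n)) comb (Fin.natAdd m w) x
      then B else x, ?_, ?_⟩
  · intro x y hxy
    have hxy' : x.val ≤ y.val := Fin.le_def.mp hxy
    dsimp only
    by_cases hx : x.val < m ∧ monoLinked (pathGraph (m + n)) comb (Fin.natAdd m w) x <;>
      by_cases hy : y.val < m ∧ monoLinked (pathGraph (m + n)) comb (Fin.natAdd m w) y
    · rw [if_pos hx, if_pos hy]
    · rw [if_pos hx, if_neg hy]
      have hym : m ≤ y.val := by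
        by_contra hge
        push_neg at hge
        refine hy ⟨hge, ?_⟩
        exact linked_between hx.2 y (by simp <;> omega) (by simp <;> omega)
      exact Fin.le_def.mpr (by simp only [hB]; omega)
    · rw [if_neg hx, if_pos hy]
      exact Fin.le_def.mpr (by simp only [hB]; omega)
    · rw [if_neg hx, if_neg hy]; exact hxy
  · funext x
    simp only [Function.comp_apply]
    by_cases hxm : x.val < m
    · by_cases hl : monoLinked (pathGraph (m + n)) comb (Fin.natAdd m w) x
      · rw [if_pos ⟨hxm, hl⟩, floodMove_of_linked hl]
        have hBm : m ≤ B.val := by simp only [hB]; omega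
        have hBn : B.val - m < n := by simp only [hB]; omega
        rw [append_apply_right ω₁ (floodMove (pathGraph n) ω₂ w c) hBm hBn]
        have hlB : monoLinked (pathGraph n) ω₂ w ⟨B.val - m, hBn⟩ := by
          have hmid : monoLinked (pathGraph (m + n)) comb (Fin.natAdd m w)
              (Fin.natAdd m ⟨B.val - m, hBn⟩) :=
            linked_between hl _ (by simp [Fin.le_def, hB] <;> omega) (by simp [Fin.le_def, hB] <;> omega)
          exact (linked_append_right ω₁ ω₂ w _).mp hmid
        rw [floodMove_of_linked hlB]
      · rw [if_neg (fun h => hl h.2), floodMove_of_not_linked hl,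
          append_apply_left ω₁ (floodMove (pathGraph n) ω₂ w c) hxm, hcomb,
          append_apply_left ω₁ ω₂ hxm]
    · push_neg at hxm
      have hxn : x.val - m < n := by have := x.isLt; omega
      have hx0 : x = Fin.natAdd m ⟨x.val - m, hxn⟩ := Fin.ext (by simp <;> omega)
      have hliff : monoLinked (pathGraph (m + n)) comb (Fin.natAdd m w) x ↔
          monoLinked (pathGraph n) ω₂ w ⟨x.val - m, hxn⟩ := by
        conv_lhs => rw [hx0]
        exact linked_append_right ω₁ ω₂ w _
      rw [if_neg (fun h => absurd h.1 (by omega))]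
      by_cases hl : monoLinked (pathGraph (m + n)) comb (Fin.natAdd m w) x
      · rw [floodMove_of_linked hl,
          append_apply_right ω₁ (floodMove (pathGraph n) ω₂ w c) hxm hxn,
          floodMove_of_linked (hliff.mp hl)]
      · rw [floodMove_of_not_linked hl,
          append_apply_right ω₁ (floodMove (pathGraph n) ω₂ w c) hxm hxn,
          floodMove_of_not_linked (fun h => hl (hliff.mpr h)), hcomb,
          append_apply_right ω₁ ω₂ hxm hxn]

lemma appendB (d : C) : ∀ (S₂ : List (Fin n × C)) (ω₂ : Fin n → C),
    (∀ a, floodSeq (pathGraph n) ω₂ S₂ a = d) →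
    ∀ ω₁ : Fin m → C, (∀ a, ω₁ a = d) →
    ∃ T : List (Fin (m + n) × C), T.length ≤ S₂.length ∧
      ∀ a, floodSeq (pathGraph (m + n)) (Fin.append ω₁ ω₂) T a = d := by
  intro S₂
  induction S₂ with
  | nil =>
    intro ω₂ hS ω₁ h1
    refine ⟨[], le_refl _, fun a => ?_⟩
    rw [floodSeq_nil]
    induction a using Fin.addCases with
    | left i => rw [Fin.append_left]; exact h1 i
    | right i => rw [Fin.append_right]; exact hS i
  | cons wc S₂' ih =>
    obtain ⟨w, c⟩ := wc
    intro ω₂ hS ω₁ h1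
    simp only [floodSeq_cons] at hS
    obtain ⟨T', hT'len, hT'⟩ := ih (floodMove (pathGraph n) ω₂ w c) hS ω₁ h1
    obtain ⟨f, hfmono, hfeq⟩ := concat_step_right ω₁ ω₂ w c
    obtain ⟨T'', hT''len, hT''⟩ := simulate d T'
      (Fin.append ω₁ (floodMove (pathGraph n) ω₂ w c)) _ f hfmono hfeq hT'
    refine ⟨(Fin.natAdd m w, c) :: T'', by simp only [List.length_cons]; omega, fun a => ?_⟩
    rw [floodSeq_cons]
    exact hT'' a

lemma appendA (d : C) : ∀ (S₁ : List (Fin m × C)) (ω₁ : Fin m → C),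
    (∀ a, floodSeq (pathGraph m) ω₁ S₁ a = d) →
    ∀ (S₂ : List (Fin n × C)) (ω₂ : Fin n → C),
      (∀ a, floodSeq (pathGraph n) ω₂ S₂ a = d) →
    ∃ T : List (Fin (m + n) × C), T.length ≤ S₁.length + S₂.length ∧
      ∀ a, floodSeq (pathGraph (m + n)) (Fin.append ω₁ ω₂) T a = d := by
  intro S₁
  induction S₁ with
  | nil =>
    intro ω₁ h1 S₂ ω₂ h2
    obtain ⟨T, hl, hT⟩ := appendB d S₂ ω₂ h2 ω₁ (fun a => h1 a)
    exact ⟨T, by simpa using hl, hT⟩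
  | cons vc S₁' ih =>
    obtain ⟨v, c⟩ := vc
    intro ω₁ h1 S₂ ω₂ h2
    simp only [floodSeq_cons] at h1
    obtain ⟨T', hT'len, hT'⟩ := ih (floodMove (pathGraph m) ω₁ v c) h1 S₂ ω₂ h2
    obtain ⟨f, hfmono, hfeq⟩ := concat_step_left ω₁ ω₂ v c
    obtain ⟨T'', hT''len, hT''⟩ := simulate d T'
      (Fin.append (floodMove (pathGraph m) ω₁ v c) ω₂) _ f hfmono hfeq hT'
    refine ⟨(Fin.castAdd n v, c) :: T'', by simp only [List.length_cons]; omega, fun a => ?_⟩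
    rw [floodSeq_cons]
    exact hT'' a

end Concat

end FloodAux


/-- subadditivity under concatenation: the cost of flooding the
concatenation of two coloured paths in colour `d` is at most the sum of the
costs of flooding the two pieces in colour `d`. -/
theorem path_concat_subadditive {C : Type*} (m n : ℕ)
    (ω₁ : Fin m → C) (ω₂ : Fin n → C) (d : C) :
    floodCostIn (SimpleGraph.pathGraph (m + n)) (Fin.append ω₁ ω₂) d ≤
      floodCostIn (SimpleGraph.pathGraph m) ω₁ d +
        floodCostIn (SimpleGraph.pathGraph n) ω₂ d := by
  classical
  have hne₁ : {k | ∃ S, S.length = k ∧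
      ∀ a, floodSeq (SimpleGraph.pathGraph m) ω₁ S a = d}.Nonempty := by
    obtain ⟨S, hS⟩ := FloodAux.exists_floods ω₁ d
    exact ⟨S.length, S, rfl, hS⟩
  have hne₂ : {k | ∃ S, S.length = k ∧
      ∀ a, floodSeq (SimpleGraph.pathGraph n) ω₂ S a = d}.Nonempty := by
    obtain ⟨S, hS⟩ := FloodAux.exists_floods ω₂ d
    exact ⟨S.length, S, rfl, hS⟩
  obtain ⟨S₁, hS₁len, hS₁⟩ := Nat.sInf_mem hne₁
  obtain ⟨S₂, hS₂len, hS₂⟩ := Nat.sInf_mem hne₂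
  obtain ⟨T, hTlen, hT⟩ := FloodAux.appendA d S₁ ω₁ hS₁ S₂ ω₂ hS₂
  have hle : floodCostIn (SimpleGraph.pathGraph (m + n)) (Fin.append ω₁ ω₂) d ≤ T.length :=
    Nat.sInf_le ⟨T, rfl, hT⟩
  calc floodCostIn (SimpleGraph.pathGraph (m + n)) (Fin.append ω₁ ω₂) d
      ≤ T.length := hle
    _ ≤ S₁.length + S₂.length := hTlen
    _ = _ := by rw [hS₁len, hS₂len]; rfl
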